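/- Let f : ℝⁿ → ℝ^d be any function, w ∈ ℝ^d, b ∈ ℝ, and let Σ be a positive semidefinite d×d matrix with wᵀΣw > 0. Let z be distributed as the centered multivariate Gaussian measure N(0, Σ) on ℝ^d, and define h(x) = wᵀ(f(x) + z) + b and margin m_h(x, y) = y·h(x). Fix x ∈ ℝⁿ, y ∈ {−1, 1}, p ∈ [1, ∞], ε ≥ 0, and Δ ≥ 0 such that |(wᵀf(x) + b) − (wᵀf(x + δ) + b)| ≤ Δ for every δ with ‖δ‖_p ≤ ε. Then the adversarial gap G_{p,ε}^h(x, y) := sup_{δ : ‖δ‖_p ≤ ε} P(m_h(x + δ, y) ≤ 0) − P(m_h(x, y) ≤ 0) satisfies G_{p,ε}^h(x, y) ≤ Δ / √(2π · wᵀΣw). -/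

import Mathlib

open MeasureTheory ProbabilityTheory Matrix
open scoped ENNReal

open Real
open scoped NNReal

/-- The standard multivariate Gaussian `N(0, I_d)` on `ℝ^d`, as the product of `d`
standard real Gaussians. -/
noncomputable def stdGaussianPi (d : ℕ) : Measure (Fin d → ℝ) :=
  Measure.pi fun _ => gaussianReal 0 1

/-- The centered multivariate Gaussian `N(0, Σ)` on `ℝ^d` with positive semidefinite
covariance matrix `Σ`, as the pushforward of the standard Gaussian under `√Σ`. -/
noncomputable def multivariateGaussian {d : ℕ} {S : Matrix (Fin d) (Fin d) ℝ}
    (hS : S.PosSemidef) : Measure (Fin d → ℝ) :=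
  (stdGaussianPi d).map (fun u => (hS.1.eigenvectorUnitary.1 *
    diagonal ((↑) ∘ (√·) ∘ hS.1.eigenvalues) *
    (star hS.1.eigenvectorUnitary : Matrix (Fin d) (Fin d) ℝ)) *ᵥ u)

/-- The cumulative distribution function `Φ` of the standard real Gaussian:
`Φ t = (1/√(2π)) ∫_{-∞}^{t} exp (-s²/2) ds`. -/
noncomputable def stdGaussianCDF (t : ℝ) : ℝ :=
  (Real.sqrt (2 * Real.pi))⁻¹ * ∫ s in Set.Iic t, Real.exp (-s ^ 2 / 2)

noncomputable abbrev sqrtM {d : ℕ} {S : Matrix (Fin d) (Fin d) ℝ} (hS : S.PosSemidef) :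
    Matrix (Fin d) (Fin d) ℝ :=
  hS.1.eigenvectorUnitary.1 *
    diagonal ((↑) ∘ (√·) ∘ hS.1.eigenvalues) *
    (star hS.1.eigenvectorUnitary : Matrix (Fin d) (Fin d) ℝ)

lemma sqrtM_mul_self {d : ℕ} {S : Matrix (Fin d) (Fin d) ℝ} (hS : S.PosSemidef) :
    sqrtM hS * sqrtM hS = S := by
  have hU : (star hS.1.eigenvectorUnitary : Matrix (Fin d) (Fin d) ℝ) *
      hS.1.eigenvectorUnitary.1 = 1 := Unitary.coe_star_mul_self _
  have hD : diagonal ((↑) ∘ (√·) ∘ hS.1.eigenvalues) *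
      diagonal ((↑) ∘ (√·) ∘ hS.1.eigenvalues) =
      (diagonal (RCLike.ofReal ∘ hS.1.eigenvalues) : Matrix (Fin d) (Fin d) ℝ) := by
    rw [diagonal_mul_diagonal]
    congr 1; funext i
    simp [Real.mul_self_sqrt (hS.eigenvalues_nonneg i)]
  conv_rhs => rw [hS.1.spectral_theorem, Unitary.conjStarAlgAut_apply]
  simp only [sqrtM]
  calc _ = hS.1.eigenvectorUnitary.1 * diagonal ((↑) ∘ (√·) ∘ hS.1.eigenvalues) *
      ((star hS.1.eigenvectorUnitary : Matrix (Fin d) (Fin d) ℝ) *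
      hS.1.eigenvectorUnitary.1) * diagonal ((↑) ∘ (√·) ∘ hS.1.eigenvalues) *
      (star hS.1.eigenvectorUnitary : Matrix (Fin d) (Fin d) ℝ) := by
        simp only [Matrix.mul_assoc]
    _ = _ := by rw [hU, Matrix.mul_one, Matrix.mul_assoc _ (diagonal _) (diagonal _), hD]

lemma sqrtM_transpose {d : ℕ} {S : Matrix (Fin d) (Fin d) ℝ} (hS : S.PosSemidef) :
    (sqrtM hS)ᵀ = sqrtM hS := by
  have : (sqrtM hS)ᴴ = sqrtM hS := by
    simp only [sqrtM, conjTranspose_mul, Matrix.mul_assoc]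
    simp [Matrix.star_eq_conjTranspose]
  rwa [Matrix.conjTranspose_eq_transpose_of_trivial] at this

lemma conv_pdf_pointwise {v₁ v₂ : ℝ≥0} (h₁ : v₁ ≠ 0) (h₂ : v₂ ≠ 0) (s a : ℝ) :
    gaussianPDFReal 0 v₁ a * gaussianPDFReal 0 v₂ (s - a)
      = gaussianPDFReal 0 (v₁ + v₂) s *
        gaussianPDFReal ((v₁ : ℝ) * s / ((v₁ : ℝ) + v₂)) (v₁ * v₂ / (v₁ + v₂)) a := by
  have hv1 : (0:ℝ) < v₁ := lt_of_le_of_ne v₁.coe_nonneg (by exact_mod_cast h₁.symm)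
  have hv2 : (0:ℝ) < v₂ := lt_of_le_of_ne v₂.coe_nonneg (by exact_mod_cast h₂.symm)
  have hsum : (0:ℝ) < (v₁:ℝ) + v₂ := by positivity
  simp only [gaussianPDFReal, sub_zero, NNReal.coe_add, NNReal.coe_div, NNReal.coe_mul]
  conv_lhs => rw [mul_mul_mul_comm]
  conv_rhs => rw [mul_mul_mul_comm]
  rw [← Real.exp_add, ← Real.exp_add,
    ← mul_inv, ← mul_inv, ← Real.sqrt_mul (by positivity), ← Real.sqrt_mul (by positivity)]
  congr 2
  · field_simp
  · field_simp
    ring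

lemma lintegral_conv_pdf {v₁ v₂ : ℝ≥0} (h₁ : v₁ ≠ 0) (h₂ : v₂ ≠ 0) (s : ℝ) :
    ∫⁻ a, gaussianPDF 0 v₁ a * gaussianPDF 0 v₂ (s - a) = gaussianPDF 0 (v₁ + v₂) s := by
  have hτ : v₁ * v₂ / (v₁ + v₂) ≠ 0 := by
    simp [div_eq_zero_iff, mul_eq_zero, add_eq_zero, h₁, h₂]
  calc ∫⁻ a, gaussianPDF 0 v₁ a * gaussianPDF 0 v₂ (s - a)
      = ∫⁻ a, ENNReal.ofReal (gaussianPDFReal 0 (v₁ + v₂) s *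
          gaussianPDFReal ((v₁ : ℝ) * s / ((v₁ : ℝ) + v₂)) (v₁ * v₂ / (v₁ + v₂)) a) := by
        simp_rw [gaussianPDF, ← ENNReal.ofReal_mul (gaussianPDFReal_nonneg 0 v₁ _),
          conv_pdf_pointwise h₁ h₂ s]
    _ = ENNReal.ofReal (gaussianPDFReal 0 (v₁ + v₂) s) *
          ∫⁻ a, ENNReal.ofReal (gaussianPDFReal ((v₁ : ℝ) * s / ((v₁ : ℝ) + v₂))
            (v₁ * v₂ / (v₁ + v₂)) a) := by
        simp_rw [ENNReal.ofReal_mul (gaussianPDFReal_nonneg 0 (v₁ + v₂) s)]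
        rw [lintegral_const_mul]
        exact (measurable_gaussianPDFReal _ _).ennreal_ofReal
    _ = gaussianPDF 0 (v₁ + v₂) s := by
        rw [lintegral_gaussianPDFReal_eq_one _ hτ, mul_one, gaussianPDF]

lemma gaussian_conv (v₁ v₂ : ℝ≥0) :
    ((gaussianReal 0 v₁).prod (gaussianReal 0 v₂)).map (fun p : ℝ × ℝ => p.1 + p.2)
      = gaussianReal 0 (v₁ + v₂) := by
  by_cases h₁ : v₁ = 0
  · subst h₁
    rw [gaussianReal_zero_var, Measure.dirac_prod, Measure.map_map (by fun_prop) (by fun_prop)]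
    simp only [Function.comp_def, zero_add]
    simp [Measure.map_id']
  by_cases h₂ : v₂ = 0
  · subst h₂
    rw [gaussianReal_zero_var, Measure.prod_dirac, Measure.map_map (by fun_prop) (by fun_prop)]
    simp only [Function.comp_def, add_zero]
    simp [Measure.map_id']
  -- main case
  have hsum : v₁ + v₂ ≠ 0 := by simp [h₁]
  have hmeas_add : Measurable (fun p : ℝ × ℝ => p.1 + p.2) := by fun_prop
  haveI : IsFiniteMeasure (((gaussianReal 0 v₁).prod (gaussianReal 0 v₂)).map
      (fun p : ℝ × ℝ => p.1 + p.2)) := by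
    haveI := Measure.isProbabilityMeasure_map hmeas_add.aemeasurable
      (μ := (gaussianReal 0 v₁).prod (gaussianReal 0 v₂))
    infer_instance
  refine Measure.ext_of_Iic _ _ fun t => ?_
  rw [Measure.map_apply hmeas_add measurableSet_Iic]
  have hset : (fun p : ℝ × ℝ => p.1 + p.2) ⁻¹' Set.Iic t = {p : ℝ × ℝ | p.1 + p.2 ≤ t} := rfl
  rw [hset, Measure.prod_apply (measurableSet_le (by fun_prop) measurable_const)]
  have hI : ∀ a : ℝ, (Prod.mk a ⁻¹' {p : ℝ × ℝ | p.1 + p.2 ≤ t}) = Set.Iic (t - a) := by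
    intro a; ext b; simp [le_sub_iff_add_le']
  simp_rw [hI]
  -- inner measure as translated integral over Iic t
  have htrans : ∀ a : ℝ, gaussianReal 0 v₂ (Set.Iic (t - a))
      = ∫⁻ s in Set.Iic t, gaussianPDF 0 v₂ (s - a) := by
    intro a
    rw [gaussianReal_apply _ h₂]
    have h := setLIntegral_map (μ := (volume : Measure ℝ)) (s := Set.Iic (t - a))
      measurableSet_Iic (measurable_gaussianPDF 0 v₂) (measurable_sub_const a)
    rw [map_sub_right_eq_self] at h
    rw [h]
    have hpre : (fun x : ℝ => x - a) ⁻¹' Set.Iic (t - a) = Set.Iic t := by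
      ext x; simp [sub_le_sub_iff_right]
    rw [hpre]
  simp_rw [htrans]
  have hg2 : Measurable (Function.uncurry fun a s : ℝ => gaussianPDF 0 v₂ (s - a)) :=
    (measurable_gaussianPDF 0 v₂).comp (by fun_prop)
  rw [gaussianReal_of_var_ne_zero _ h₁,
    lintegral_withDensity_eq_lintegral_mul _ (measurable_gaussianPDF _ _) (by
      apply Measurable.lintegral_prod_right (f := fun a s : ℝ => gaussianPDF 0 v₂ (s - a))
      exact hg2)]
  simp only [Pi.mul_apply]
  have hpull : ∀ a : ℝ, gaussianPDF 0 v₁ a * ∫⁻ s in Set.Iic t, gaussianPDF 0 v₂ (s - a)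
      = ∫⁻ s in Set.Iic t, gaussianPDF 0 v₁ a * gaussianPDF 0 v₂ (s - a) := fun a =>
    (lintegral_const_mul _ ((measurable_gaussianPDF 0 v₂).comp (by fun_prop))).symm
  simp_rw [hpull]
  rw [lintegral_lintegral_swap (((measurable_gaussianPDF 0 v₁).comp measurable_fst).mul
    ((measurable_gaussianPDF 0 v₂).comp (by fun_prop))).aemeasurable]
  have : ∀ s : ℝ, ∫⁻ a, gaussianPDF 0 v₁ a * gaussianPDF 0 v₂ (s - a)
      = gaussianPDF 0 (v₁ + v₂) s := fun s => lintegral_conv_pdf h₁ h₂ s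
  simp_rw [this]
  rw [← gaussianReal_apply _ hsum]

lemma measurable_dotProduct {d : ℕ} (v : Fin d → ℝ) :
    Measurable (fun u : Fin d → ℝ => v ⬝ᵥ u) := by
  unfold dotProduct
  exact Finset.measurable_sum _ (fun i _ => by fun_prop)

lemma map_dotProduct (d : ℕ) (v : Fin d → ℝ) :
    (stdGaussianPi d).map (fun u => v ⬝ᵥ u)
      = gaussianReal 0 (∑ i, (⟨v i ^ 2, sq_nonneg _⟩ : ℝ≥0)) := by
  induction d with
  | zero =>
    have hconst : (fun u : Fin 0 → ℝ => v ⬝ᵥ u) = fun _ => (0 : ℝ) := by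
      ext u; simp [dotProduct]
    rw [hconst, Measure.map_const]
    haveI : IsProbabilityMeasure (stdGaussianPi 0) := by
      unfold stdGaussianPi; infer_instance
    simp only [measure_univ, one_smul]
    have h0 : (∑ i, (⟨v i ^ 2, sq_nonneg _⟩ : ℝ≥0)) = 0 := by simp
    erw [h0]
    exact (gaussianReal_zero_var 0).symm
  | succ d ih =>
    haveI : IsProbabilityMeasure (stdGaussianPi d) := by
      unfold stdGaussianPi; infer_instance
    have hmp := measurePreserving_piFinSuccAbove (fun _ : Fin (d + 1) => gaussianReal 0 1) 0
    set e := MeasurableEquiv.piFinSuccAbove (fun _ : Fin (d + 1) => ℝ) 0 with he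
    have hstd : stdGaussianPi (d + 1)
        = ((gaussianReal 0 1).prod (stdGaussianPi d)).map e.symm := by
      show Measure.pi (fun _ : Fin (d+1) => gaussianReal 0 1)
        = ((gaussianReal 0 1).prod (Measure.pi fun _ : Fin d => gaussianReal 0 1)).map e.symm
      rw [← hmp.map_eq]
      rw [Measure.map_map e.symm.measurable e.measurable]
      simp [Measure.map_id']
    rw [hstd, Measure.map_map (measurable_dotProduct v) e.symm.measurable]
    have hcomp : ((fun u => v ⬝ᵥ u) ∘ e.symm)
        = (fun q : ℝ × ℝ => q.1 + q.2) ∘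
          (Prod.map (fun a : ℝ => v 0 * a) (fun u : Fin d → ℝ => (fun j => v j.succ) ⬝ᵥ u)) := by
      ext p
      simp only [Function.comp_apply, Prod.map_apply, he,
        MeasurableEquiv.piFinSuccAbove_symm_apply]
      rw [dotProduct]
      rw [Fin.sum_univ_succ]
      simp [dotProduct, Fin.insertNthEquiv, Fin.insertNth_apply_same,
        Fin.insertNth_apply_succAbove, Fin.succAbove_zero]
    rw [hcomp, ← Measure.map_map (by fun_prop)
      ((measurable_const_mul _).prodMap (measurable_dotProduct _)),
      ← Measure.map_prod_map _ _ (measurable_const_mul _) (measurable_dotProduct _),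
      gaussianReal_map_const_mul, ih, mul_zero, gaussian_conv]
    congr 1
    refine NNReal.coe_injective ?_
    push_cast
    erw [NNReal.coe_sum, NNReal.coe_sum]
    change v 0 ^ 2 * 1 + ∑ i : Fin d, v i.succ ^ 2 = ∑ i, v i ^ 2
    rw [Fin.sum_univ_succ]
    ring

lemma gauss_le (V : ℝ≥0) (hV : V ≠ 0) {L : ℝ} (hL : 0 ≤ L) {C : Set ℝ}
    (hvol : volume C ≤ ENNReal.ofReal L) :
    (gaussianReal 0 V C).toReal ≤ L / Real.sqrt (2 * π * V) := by
  have hc0 : (0:ℝ) ≤ (Real.sqrt (2 * π * V))⁻¹ := by positivity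
  have hpdf_le : ∀ x, gaussianPDF 0 V x ≤ ENNReal.ofReal ((Real.sqrt (2 * π * V))⁻¹) := by
    intro x
    refine ENNReal.ofReal_le_ofReal ?_
    unfold gaussianPDFReal
    calc (Real.sqrt (2 * π * V))⁻¹ * rexp (-(x - 0) ^ 2 / (2 * V))
        ≤ (Real.sqrt (2 * π * V))⁻¹ * 1 := by
          refine mul_le_mul_of_nonneg_left ?_ hc0
          rw [← Real.exp_zero]
          apply Real.exp_le_exp.mpr
          have : (0:ℝ) < 2 * (V:ℝ) := by
            have : (0:ℝ) < V := lt_of_le_of_ne V.coe_nonneg (by exact_mod_cast hV.symm)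
            linarith
          apply div_nonpos_of_nonpos_of_nonneg (neg_nonpos_of_nonneg (sq_nonneg _)) this.le
      _ = (Real.sqrt (2 * π * V))⁻¹ := mul_one _
  have hle : gaussianReal 0 V C ≤ ENNReal.ofReal ((Real.sqrt (2 * π * V))⁻¹ * L) := by
    calc gaussianReal 0 V C = ∫⁻ x in C, gaussianPDF 0 V x := gaussianReal_apply 0 hV C
      _ ≤ ∫⁻ _ in C, ENNReal.ofReal ((Real.sqrt (2 * π * V))⁻¹) :=
          lintegral_mono fun x => hpdf_le x
      _ = ENNReal.ofReal ((Real.sqrt (2 * π * V))⁻¹) * volume C := setLIntegral_const _ _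
      _ ≤ ENNReal.ofReal ((Real.sqrt (2 * π * V))⁻¹) * ENNReal.ofReal L :=
          mul_le_mul_right hvol _
      _ = ENNReal.ofReal ((Real.sqrt (2 * π * V))⁻¹ * L) := (ENNReal.ofReal_mul hc0).symm
  calc (gaussianReal 0 V C).toReal
      ≤ (ENNReal.ofReal ((Real.sqrt (2 * π * V))⁻¹ * L)).toReal :=
        ENNReal.toReal_mono ENNReal.ofReal_ne_top hle
    _ = (Real.sqrt (2 * π * V))⁻¹ * L := ENNReal.toReal_ofReal (by positivity)
    _ = L / Real.sqrt (2 * π * V) := by rw [div_eq_mul_inv, mul_comm]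

lemma gap_Iic (V : ℝ≥0) (hV : V ≠ 0) {Δ : ℝ} (hΔ : 0 ≤ Δ) {t0 td : ℝ}
    (h : |td - t0| ≤ Δ) :
    (gaussianReal 0 V (Set.Iic td)).toReal - (gaussianReal 0 V (Set.Iic t0)).toReal
      ≤ Δ / Real.sqrt (2 * π * V) := by
  have hrhs : 0 ≤ Δ / Real.sqrt (2 * π * V) := by positivity
  rcases le_or_gt td t0 with hle | hlt
  · have := ENNReal.toReal_mono (measure_ne_top _ _)
      (measure_mono (Set.Iic_subset_Iic.mpr hle) :
        gaussianReal 0 V (Set.Iic td) ≤ gaussianReal 0 V (Set.Iic t0))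
    linarith
  · have hunion : Set.Iic td = Set.Iic t0 ∪ Set.Ioc t0 td := (Set.Iic_union_Ioc_eq_Iic hlt.le).symm
    have hb := measure_union_le (μ := gaussianReal 0 V) (Set.Iic t0) (Set.Ioc t0 td)
    rw [← hunion] at hb
    have hb' := ENNReal.toReal_mono
      (by exact ENNReal.add_ne_top.mpr ⟨measure_ne_top _ _, measure_ne_top _ _⟩) hb
    rw [ENNReal.toReal_add (measure_ne_top _ _) (measure_ne_top _ _)] at hb'
    have hIoc : (gaussianReal 0 V (Set.Ioc t0 td)).toReal ≤ Δ / Real.sqrt (2 * π * V) := by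
      apply gauss_le V hV hΔ
      rw [Real.volume_Ioc]
      apply ENNReal.ofReal_le_ofReal
      calc td - t0 ≤ |td - t0| := le_abs_self _
        _ ≤ Δ := h
    linarith

lemma gap_Ici (V : ℝ≥0) (hV : V ≠ 0) {Δ : ℝ} (hΔ : 0 ≤ Δ) {t0 td : ℝ}
    (h : |td - t0| ≤ Δ) :
    (gaussianReal 0 V (Set.Ici td)).toReal - (gaussianReal 0 V (Set.Ici t0)).toReal
      ≤ Δ / Real.sqrt (2 * π * V) := by
  have hrhs : 0 ≤ Δ / Real.sqrt (2 * π * V) := by positivity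
  rcases le_or_gt t0 td with hle | hlt
  · have := ENNReal.toReal_mono (measure_ne_top _ _)
      (measure_mono (Set.Ici_subset_Ici.mpr hle) :
        gaussianReal 0 V (Set.Ici td) ≤ gaussianReal 0 V (Set.Ici t0))
    linarith
  · have hunion : Set.Ici td = Set.Ico td t0 ∪ Set.Ici t0 := (Set.Ico_union_Ici_eq_Ici hlt.le).symm
    have hb := measure_union_le (μ := gaussianReal 0 V) (Set.Ico td t0) (Set.Ici t0)
    rw [← hunion] at hb
    have hb' := ENNReal.toReal_mono
      (by exact ENNReal.add_ne_top.mpr ⟨measure_ne_top _ _, measure_ne_top _ _⟩) hb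
    rw [ENNReal.toReal_add (measure_ne_top _ _) (measure_ne_top _ _)] at hb'
    have hIco : (gaussianReal 0 V (Set.Ico td t0)).toReal ≤ Δ / Real.sqrt (2 * π * V) := by
      apply gauss_le V hV hΔ
      rw [Real.volume_Ico]
      apply ENNReal.ofReal_le_ofReal
      calc t0 - td ≤ |t0 - td| := le_abs_self _
        _ = |td - t0| := abs_sub_comm _ _
        _ ≤ Δ := h
    linarith

theorem statement1 {n d : ℕ} (p : ℝ≥0∞) (hp : 1 ≤ p)
    (f : PiLp p (fun _ : Fin n => ℝ) → (Fin d → ℝ)) (w : Fin d → ℝ) (b : ℝ)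
    (S : Matrix (Fin d) (Fin d) ℝ) (hS : S.PosSemidef)
    (hw : 0 < w ⬝ᵥ (S *ᵥ w))
    (x : PiLp p (fun _ : Fin n => ℝ)) (y : ℝ) (hy : y = -1 ∨ y = 1)
    (ε : ℝ) (hε : 0 ≤ ε) (Δ : ℝ) (hΔ : 0 ≤ Δ)
    (hrobust : ∀ δ : PiLp p (fun _ : Fin n => ℝ), ‖δ‖ ≤ ε →
      |(w ⬝ᵥ f x + b) - (w ⬝ᵥ f (x + δ) + b)| ≤ Δ) :
    (⨆ δ : {δ : PiLp p (fun _ : Fin n => ℝ) // ‖δ‖ ≤ ε},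
        (multivariateGaussian hS {z | y * (w ⬝ᵥ (f (x + δ.1) + z) + b) ≤ 0}).toReal) -
      (multivariateGaussian hS {z | y * (w ⬝ᵥ (f x + z) + b) ≤ 0}).toReal ≤
    Δ / Real.sqrt (2 * Real.pi * (w ⬝ᵥ (S *ᵥ w))) := by
  classical
  set V : ℝ≥0 := ⟨w ⬝ᵥ (S *ᵥ w), hw.le⟩ with hVdef
  have hVcoe : (V : ℝ) = w ⬝ᵥ (S *ᵥ w) := rfl
  have hV : V ≠ 0 := by
    intro h
    have : (V : ℝ) = 0 := by rw [h]; simp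
    rw [hVcoe] at this
    exact hw.ne' this
  have hsqrtmeas : Measurable (fun u : Fin d → ℝ => sqrtM hS *ᵥ u) :=
    measurable_pi_lambda _ (fun i => measurable_dotProduct (sqrtM hS i))
  -- the pushforward of the multivariate gaussian under the linear functional
  have key : ∀ B : Set ℝ, MeasurableSet B →
      multivariateGaussian hS ((fun z => w ⬝ᵥ z) ⁻¹' B) = gaussianReal 0 V B := by
    intro B hB
    rw [_root_.multivariateGaussian, Measure.map_apply hsqrtmeas (hB.preimage (measurable_dotProduct w))]
    have hpre : (fun u : Fin d → ℝ => sqrtM hS *ᵥ u) ⁻¹' ((fun z => w ⬝ᵥ z) ⁻¹' B)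
        = (fun u => (w ᵥ* sqrtM hS) ⬝ᵥ u) ⁻¹' B := by
      ext u
      simp [Set.mem_preimage, Matrix.dotProduct_mulVec]
    rw [hpre, ← Measure.map_apply (measurable_dotProduct _) hB, map_dotProduct]
    have hvar : (∑ i, (⟨(w ᵥ* sqrtM hS) i ^ 2, sq_nonneg _⟩ : ℝ≥0)) = V := by
      refine NNReal.coe_injective ?_
      erw [NNReal.coe_sum]
      change ∑ i, (w ᵥ* sqrtM hS) i ^ 2 = (V : ℝ)
      have hsq : ∀ xv : Fin d → ℝ, ∑ i, xv i ^ 2 = xv ⬝ᵥ xv := by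
        intro xv; simp [dotProduct, sq]
      rw [hsq, hVcoe]
      have hM : sqrtM hS * sqrtM hS = S := sqrtM_mul_self hS
      have hsymm : (sqrtM hS)ᵀ = sqrtM hS := sqrtM_transpose hS
      calc (w ᵥ* sqrtM hS) ⬝ᵥ (w ᵥ* sqrtM hS)
          = (w ᵥ* sqrtM hS) ⬝ᵥ ((sqrtM hS)ᵀ *ᵥ w) := by rw [Matrix.mulVec_transpose]
        _ = (w ᵥ* sqrtM hS) ⬝ᵥ (sqrtM hS *ᵥ w) := by rw [hsymm]
        _ = ((w ᵥ* sqrtM hS) ᵥ* sqrtM hS) ⬝ᵥ w := by rw [Matrix.dotProduct_mulVec]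
        _ = (w ᵥ* S) ⬝ᵥ w := by rw [Matrix.vecMul_vecMul, hM]
        _ = w ⬝ᵥ (S *ᵥ w) := (Matrix.dotProduct_mulVec _ _ _).symm
    erw [hvar]
  have hrhs0 : 0 ≤ Δ / Real.sqrt (2 * Real.pi * (w ⬝ᵥ (S *ᵥ w))) := by positivity
  have hbase0 : 0 ≤ (multivariateGaussian hS {z | y * (w ⬝ᵥ (f x + z) + b) ≤ 0}).toReal :=
    ENNReal.toReal_nonneg
  rw [sub_le_iff_le_add]
  refine Real.iSup_le (fun δ => ?_) (by linarith)
  rw [← sub_le_iff_le_add]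
  have habs : |(-(w ⬝ᵥ f (x + δ.1) + b)) - (-(w ⬝ᵥ f x + b))| ≤ Δ := by
    have := hrobust δ.1 δ.2
    rw [show (-(w ⬝ᵥ f (x + δ.1) + b)) - (-(w ⬝ᵥ f x + b))
      = (w ⬝ᵥ f x + b) - (w ⬝ᵥ f (x + δ.1) + b) by ring]
    exact this
  rcases hy with hy | hy <;> subst hy
  · -- y = -1 : event is {z | -c' ≤ w ⬝ᵥ z}, i.e. Ici
    have hset : ∀ x' : PiLp p (fun _ : Fin n => ℝ),
        {z : Fin d → ℝ | (-1 : ℝ) * (w ⬝ᵥ (f x' + z) + b) ≤ 0}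
          = (fun z => w ⬝ᵥ z) ⁻¹' Set.Ici (-(w ⬝ᵥ f x' + b)) := by
      intro x'
      ext z
      simp only [Set.mem_setOf_eq, Set.mem_preimage, Set.mem_Ici, dotProduct_add]
      constructor <;> intro h <;> nlinarith
    rw [hset, hset, key _ measurableSet_Ici, key _ measurableSet_Ici]
    have := gap_Ici V hV hΔ habs
    rw [hVcoe] at this
    exact this
  · have hset : ∀ x' : PiLp p (fun _ : Fin n => ℝ),
        {z : Fin d → ℝ | (1 : ℝ) * (w ⬝ᵥ (f x' + z) + b) ≤ 0}
          = (fun z => w ⬝ᵥ z) ⁻¹' Set.Iic (-(w ⬝ᵥ f x' + b)) := by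
      intro x'
      ext z
      simp only [Set.mem_setOf_eq, Set.mem_preimage, Set.mem_Iic, dotProduct_add]
      constructor <;> intro h <;> nlinarith
    rw [hset, hset, key _ measurableSet_Iic, key _ measurableSet_Iic]
    have := gap_Iic V hV hΔ habs
    rw [hVcoe] at this
    exact this
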